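/- Let q : G̃ → G be a surjective homomorphism with kernel contained in the center of G̃, where G is a nonabelian simple group, and assume every endomorphism of G̃ is either trivial or an automorphism. Then every endomorphism of G̃ maps ker(q) into ker(q), and q induces an injective homomorphism Aut(G̃) → Aut(G); if moreover every homomorphism G → G lifts (uniquely up to the central kernel) through q, this map is an isomorphism Aut(G̃) ≅ Aut(G). -/

import Mathlib

theorem stmt16 {Gt G : Type*} [Group Gt] [Group G]
    (q : Gt →* G) (hq : Function.Surjective q) (hqc : q.ker ≤ Subgroup.center Gt)
    (hsimple : IsSimpleGroup G) (hnonab : ¬ ∀ a b : G, a * b = b * a)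
    (hend : ∀ f : Gt →* Gt, f = 1 ∨ Function.Bijective f) :
    (∀ f : Gt →* Gt, ∀ x ∈ q.ker, f x ∈ q.ker) ∧
    ∃ Φ : MulAut Gt →* MulAut G,
      (∀ (α : MulAut Gt) (x : Gt), Φ α (q x) = q (α x)) ∧
      Function.Injective Φ ∧
      ((∀ f : G →* G, ∃ g : Gt →* Gt, q.comp g = f.comp q) →
        Function.Bijective Φ) := by
  classical
  -- center of G is trivial
  have hZG : Subgroup.center G = ⊥ := by
    rcases hsimple.eq_bot_or_eq_top_of_normal (Subgroup.center G)
        inferInstance with h | h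
    · exact h
    · exact absurd (fun a b => Subgroup.mem_center_iff.mp
        (h ▸ Subgroup.mem_top b : b ∈ Subgroup.center G) a) hnonab
  -- center of Gt is contained in ker q
  have hcent : Subgroup.center Gt ≤ q.ker := by
    intro z hz
    have : q z ∈ Subgroup.center G := by
      rw [Subgroup.mem_center_iff]
      intro g
      obtain ⟨y, rfl⟩ := hq g
      rw [← map_mul, ← map_mul, Subgroup.mem_center_iff.mp hz y]
    rw [hZG, Subgroup.mem_bot] at this
    exact this
  -- automorphisms preserve the center, hence ker q
  have key : ∀ (α : MulAut Gt), ∀ x ∈ q.ker, α x ∈ q.ker := by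
    intro α x hx
    apply hcent
    have hxc := hqc hx
    rw [Subgroup.mem_center_iff]
    intro g
    have : α (α.symm g * x) = α (x * α.symm g) := by
      rw [Subgroup.mem_center_iff.mp hxc (α.symm g)]
    simpa [map_mul] using this
  have part1 : ∀ f : Gt →* Gt, ∀ x ∈ q.ker, f x ∈ q.ker := by
    intro f x hx
    rcases hend f with rfl | hb
    · simp
    · exact key (MulEquiv.ofBijective f hb) x hx
  refine ⟨part1, ?_⟩
  -- build the lift of endomorphisms
  have hker : ∀ α : MulAut Gt, q.ker ≤ (q.comp α.toMonoidHom).ker := by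
    intro α x hx
    rw [MonoidHom.mem_ker]
    exact key α x hx
  let toG : MulAut Gt → (G →* G) := fun α =>
    q.liftOfRightInverse (Function.surjInv hq) (Function.rightInverse_surjInv hq)
      ⟨q.comp α.toMonoidHom, hker α⟩
  have htoG : ∀ (α : MulAut Gt) (x : Gt), toG α (q x) = q (α x) := fun α x =>
    q.liftOfRightInverse_comp_apply _ _ ⟨q.comp α.toMonoidHom, hker α⟩ x
  let Ψ : MulAut Gt → MulAut G := fun α =>
    { toFun := toG α
      invFun := toG α⁻¹
      left_inv := by
        intro g
        obtain ⟨x, rfl⟩ := hq g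
        rw [htoG, htoG]
        simp
      right_inv := by
        intro g
        obtain ⟨x, rfl⟩ := hq g
        rw [htoG, htoG]
        simp
      map_mul' := (toG α).map_mul }
  have hΨ : ∀ (α : MulAut Gt) (x : Gt), Ψ α (q x) = q (α x) := htoG
  let Φ : MulAut Gt →* MulAut G :=
    { toFun := Ψ
      map_one' := by
        ext g
        obtain ⟨x, rfl⟩ := hq g
        simp [hΨ]
      map_mul' := by
        intro α β
        ext g
        obtain ⟨x, rfl⟩ := hq g
        simp only [MulAut.mul_apply]
        rw [hΨ, hΨ, hΨ]
        rfl }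
  have hΦeval : ∀ (α : MulAut Gt) (x : Gt), Φ α (q x) = q (α x) := hΨ
  have hinj : Function.Injective Φ := by
    rw [injective_iff_map_eq_one]
    intro α hα
    have hαq : ∀ x, q (α x) = q x := by
      intro x
      have := congrArg (fun e : MulAut G => e (q x)) hα
      simpa [hΦeval] using this
    have hcen : ∀ x : Gt, α x * x⁻¹ ∈ Subgroup.center Gt := by
      intro x
      apply hqc
      rw [MonoidHom.mem_ker, map_mul, map_inv, hαq, mul_inv_cancel]
    let c : Gt →* Gt :=
      { toFun := fun x => α x * x⁻¹
        map_one' := by simp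
        map_mul' := by
          intro x y
          have hy := Subgroup.mem_center_iff.mp (hcen y)
          calc α (x * y) * (x * y)⁻¹ = α x * ((α y * y⁻¹) * x⁻¹) := by
                simp [mul_inv_rev, mul_assoc]
            _ = α x * (x⁻¹ * (α y * y⁻¹)) := by rw [← hy x⁻¹]
            _ = (α x * x⁻¹) * (α y * y⁻¹) := by rw [mul_assoc] }
    rcases hend c with hc | hc
    · ext x
      have hx : c x = 1 := by rw [hc]; rfl
      have : α x * x⁻¹ = 1 := hx
      have := mul_eq_one_iff_eq_inv.mp this
      simpa using this
    · exfalso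
      apply hnonab
      have habGt : ∀ u : Gt, u ∈ Subgroup.center Gt := by
        intro u
        obtain ⟨v, hv⟩ := hc.2 u
        rw [← hv]
        exact hcen v
      intro a b
      obtain ⟨a', rfl⟩ := hq a
      obtain ⟨b', rfl⟩ := hq b
      rw [← map_mul, ← map_mul,
        (Subgroup.mem_center_iff.mp (habGt a') b').symm]
  refine ⟨Φ, hΦeval, hinj, ?_⟩
  intro hlift
  refine ⟨hinj, ?_⟩
  intro β
  obtain ⟨g, hg⟩ := hlift β.toMonoidHom
  have hg' : ∀ x, q (g x) = β (q x) := fun x => congrArg (fun f : Gt →* G => f x) hg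
  rcases hend g with rfl | hb
  · exfalso
    obtain ⟨a, b, hab⟩ : ∃ a b : G, a * b ≠ b * a := by
      by_contra h
      push_neg at h
      exact hnonab h
    have ha1 : a ≠ 1 := fun h => hab (by rw [h]; simp)
    obtain ⟨a', ha'⟩ := hq a
    have : β (q a') = 1 := by rw [← hg' a']; simp
    rw [ha'] at this
    exact ha1 (β.injective (by simpa using this))
  · refine ⟨MulEquiv.ofBijective g hb, ?_⟩
    ext x
    obtain ⟨y, rfl⟩ := hq x
    rw [hΦeval]
    exact hg' y
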